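/- Let d ≥ 2 and let Θ ⊆ ℝ^d be a nonempty compact set of positive reach which is a C³-hypersurface in the following sense: for every θ ∈ Θ there exist ε > 0, a linear isometric isomorphism T: ℝ^{d−1} × ℝ → ℝ^d, and a three times continuously differentiable function b: ℝ^{d−1} → ℝ such that Θ ∩ B(θ, ε) = { T(y, b(y)) : y ∈ ℝ^{d−1} } ∩ B(θ, ε), where B(θ, ε) is the open Euclidean ball. Then for all x, y ∈ ℝ^d ∖ Θ and all η > 0 there exists a curve γ: [0,1] → ℝ^d with γ(0) = x, γ(1) = y, ℓ(γ) < ‖y − x‖ + η, and such that the set γ([0,1]) ∩ Θ is finite. -/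

import Mathlib

open Set ENNReal Metric Module Filter Topology
set_option maxHeartbeats 1000000

/-- The length of a curve `γ : ℝ → ℝ^d` (considered on the parameter interval `[0,1]`):
the supremum over all partitions `0 = t₀ < ⋯ < tₙ = 1` of `∑ ‖γ tₖ - γ tₖ₋₁‖`,
possibly infinite.  This coincides with the total variation of `γ` on `[0,1]`. -/
noncomputable def curveLength {d : ℕ} (γ : ℝ → EuclideanSpace ℝ (Fin d)) : ℝ≥0∞ :=
  eVariationOn γ (Set.Icc 0 1)

/-- A set `Θ ⊆ ℝ^d` is of positive reach if points sufficiently close to `Θ` have a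
unique nearest point in `Θ`. -/
def HasPositiveReach {d : ℕ} (Θ : Set (EuclideanSpace ℝ (Fin d))) : Prop :=
  ∃ ε > (0 : ℝ), ∀ x : EuclideanSpace ℝ (Fin d), Metric.infDist x Θ < ε →
    ∃! p : EuclideanSpace ℝ (Fin d), p ∈ Θ ∧ ‖x - p‖ = Metric.infDist x Θ

/-- `Θ ⊆ ℝ^d` is a `C³`-hypersurface: locally, after an isometric linear change of
coordinates, it is the graph of a `C³` function `b : ℝ^{d-1} → ℝ`. -/
def IsC3Hypersurface {d : ℕ} (Θ : Set (EuclideanSpace ℝ (Fin d))) : Prop :=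
  ∀ θ ∈ Θ, ∃ ε > (0 : ℝ),
    ∃ T : WithLp 2 (EuclideanSpace ℝ (Fin (d - 1)) × ℝ) ≃ₗᵢ[ℝ] EuclideanSpace ℝ (Fin d),
    ∃ b : EuclideanSpace ℝ (Fin (d - 1)) → ℝ, ContDiff ℝ 3 b ∧
      Θ ∩ Metric.ball θ ε =
        {z : EuclideanSpace ℝ (Fin d) | ∃ y : EuclideanSpace ℝ (Fin (d - 1)),
          z = T ((WithLp.equiv 2 (EuclideanSpace ℝ (Fin (d - 1)) × ℝ)).symm (y, b y))}
          ∩ Metric.ball θ ε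

private lemma evar_affine_le {d : ℕ} (a v : EuclideanSpace ℝ (Fin d)) {c e : ℝ} (h : c ≤ e) :
    eVariationOn (fun t : ℝ => a + t • v) (Icc c e) ≤ ENNReal.ofReal ((e - c) * ‖v‖) := by
  have hL : LipschitzWith ‖v‖₊ (fun t : ℝ => a + t • v) := by
    apply LipschitzWith.of_dist_le_mul
    intro s t
    simp only [dist_eq_norm, add_sub_add_left_eq_sub, ← sub_smul, norm_smul]
    simp [Real.norm_eq_abs, mul_comm]
  have h2 := (hL.lipschitzOnWith (s := univ)).comp_eVariationOn_le
      (g := id) (s := Icc c e) (mapsTo_univ _ _)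
  have h3 : eVariationOn (id : ℝ → ℝ) (Icc c e) ≤ ENNReal.ofReal (e - c) := by
    have := (monotone_id.monotoneOn (univ : Set ℝ)).eVariationOn_le
      (mem_univ c) (mem_univ e)
    simpa using this
  calc eVariationOn (fun t : ℝ => a + t • v) (Icc c e)
      = eVariationOn ((fun t : ℝ => a + t • v) ∘ id) (Icc c e) := rfl
    _ ≤ (‖v‖₊ : ℝ≥0∞) * eVariationOn id (Icc c e) := h2
    _ ≤ (‖v‖₊ : ℝ≥0∞) * ENNReal.ofReal (e - c) := by gcongr
    _ = ENNReal.ofReal ((e - c) * ‖v‖) := by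
        rw [← ENNReal.ofReal_coe_nnreal, coe_nnnorm, ← ENNReal.ofReal_mul (norm_nonneg v), mul_comm]

private lemma exists_good_w (d : ℕ) (hd : 2 ≤ d) (Θ : Set (EuclideanSpace ℝ (Fin d)))
    (hcomp : IsCompact Θ) (hsurf : IsC3Hypersurface Θ)
    (x y : EuclideanSpace ℝ (Fin d)) (hx : x ∉ Θ) (hxy : x ≠ y)
    (r : ℝ) (hr : 0 < r) :
    ∃ w : EuclideanSpace ℝ (Fin d), ‖w‖ < r ∧ (inner ℝ (y - x) w : ℝ) = 0 ∧
      (segment ℝ x (y + w) ∩ Θ).Finite := by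
  classical
  have E_def : True := trivial
  set c₀ : ℝ := ‖y - x‖ with hc₀def
  have hc₀ : 0 < c₀ := by
    rw [hc₀def]; exact norm_sub_pos_iff.mpr (Ne.symm hxy)
  set v₀ : EuclideanSpace ℝ (Fin d) := c₀⁻¹ • (y - x) with hv₀def
  have hv₀x : (inner ℝ v₀ (y - x) : ℝ) = c₀ := by
    rw [hv₀def, real_inner_smul_left, real_inner_self_eq_norm_sq, ← hc₀def]
    field_simp
  have hv₀ : v₀ ≠ 0 := by
    intro h
    rw [h, inner_zero_left] at hv₀x
    exact hc₀.ne' hv₀x.symm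
  haveI : Fact (finrank ℝ (EuclideanSpace ℝ (Fin d)) = (d - 1) + 1) :=
    ⟨by simp only [finrank_euclideanSpace_fin]; omega⟩
  set K : Submodule ℝ (EuclideanSpace ℝ (Fin d)) := (ℝ ∙ v₀)ᗮ with hKdef
  set ψ : K ≃ₗᵢ[ℝ] EuclideanSpace ℝ (Fin (d-1)) := (OrthonormalBasis.fromOrthogonalSpanSingleton (𝕜 := ℝ) (d - 1) hv₀).repr
    with hψdef
  set M : EuclideanSpace ℝ (Fin d) →L[ℝ] EuclideanSpace ℝ (Fin (d-1)) := (ψ.toLinearIsometry.toContinuousLinearMap).comp (K.orthogonalProjectionOnto)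
    with hMdef
  -- choose charts
  have hsurf' : ∀ i : Θ, ∃ ε > (0:ℝ),
      ∃ T : WithLp 2 (EuclideanSpace ℝ (Fin (d - 1)) × ℝ) ≃ₗᵢ[ℝ] EuclideanSpace ℝ (Fin d),
      ∃ b : EuclideanSpace ℝ (Fin (d - 1)) → ℝ, ContDiff ℝ 3 b ∧
        Θ ∩ Metric.ball (i : EuclideanSpace ℝ (Fin d)) ε =
          {z : EuclideanSpace ℝ (Fin d) | ∃ u : EuclideanSpace ℝ (Fin (d - 1)),
            z = T ((WithLp.equiv 2 (EuclideanSpace ℝ (Fin (d - 1)) × ℝ)).symm (u, b u))}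
            ∩ Metric.ball (i : EuclideanSpace ℝ (Fin d)) ε := fun i => hsurf i i.2
  choose ε hε T bb hbb heq using hsurf'
  -- finite subcover
  obtain ⟨t, ht⟩ := hcomp.elim_finite_subcover
    (fun i : Θ => ball (i : EuclideanSpace ℝ (Fin d)) (ε i))
    (fun i => isOpen_ball) (fun θ hθ => mem_iUnion.mpr ⟨⟨θ, hθ⟩, mem_ball_self (hε ⟨θ, hθ⟩)⟩)
  -- local maps
  set φ : Θ → EuclideanSpace ℝ (Fin (d-1)) → EuclideanSpace ℝ (Fin d) :=
    fun θ u => T θ ((WithLp.equiv 2 (EuclideanSpace ℝ (Fin (d-1)) × ℝ)).symm (u, bb θ u))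
    with hφdef
  have hbdiff : ∀ θ : Θ, Differentiable ℝ (bb θ) := fun θ =>
    (hbb θ).differentiable (by norm_num)
  have hφd : ∀ θ : Θ, ∀ u : EuclideanSpace ℝ (Fin (d-1)),
      ∃ Dφ : EuclideanSpace ℝ (Fin (d-1)) →L[ℝ] EuclideanSpace ℝ (Fin d),
      HasFDerivAt (φ θ) Dφ u ∧ ∀ c, Dφ c =
        T θ ((WithLp.equiv 2 (EuclideanSpace ℝ (Fin (d-1)) × ℝ)).symm
          (c, fderiv ℝ (bb θ) u c)) := by
    intro θ u
    set L : (EuclideanSpace ℝ (Fin (d-1)) × ℝ) →L[ℝ] EuclideanSpace ℝ (Fin d) :=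
      (((T θ).toContinuousLinearEquiv :
          WithLp 2 (EuclideanSpace ℝ (Fin (d-1)) × ℝ) →L[ℝ] EuclideanSpace ℝ (Fin d)).comp
        (((WithLp.prodContinuousLinearEquiv 2 ℝ (EuclideanSpace ℝ (Fin (d-1))) ℝ).symm :
          (EuclideanSpace ℝ (Fin (d-1)) × ℝ) →L[ℝ]
            WithLp 2 (EuclideanSpace ℝ (Fin (d-1)) × ℝ)))) with hLdef
    have hLapp : ∀ q : EuclideanSpace ℝ (Fin (d-1)) × ℝ,
        L q = T θ ((WithLp.equiv 2 (EuclideanSpace ℝ (Fin (d-1)) × ℝ)).symm q) := by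
      intro q
      simp [hLdef]
    have hpair : HasFDerivAt (fun u' => (u', bb θ u'))
        ((ContinuousLinearMap.id ℝ (EuclideanSpace ℝ (Fin (d-1)))).prod (fderiv ℝ (bb θ) u)) u :=
      (hasFDerivAt_id u).prodMk (hbdiff θ u).hasFDerivAt
    have hcomp := L.hasFDerivAt.comp u hpair
    refine ⟨L.comp ((ContinuousLinearMap.id ℝ (EuclideanSpace ℝ (Fin (d-1)))).prod
      (fderiv ℝ (bb θ) u)), ?_, ?_⟩
    · have hfun : φ θ = fun u' => L (u', bb θ u') := by
        funext u'; rw [hLapp]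
      rw [hfun]
      exact hcomp
    · intro c
      simp [hLapp]
  set πf : EuclideanSpace ℝ (Fin d) → EuclideanSpace ℝ (Fin d) :=
    fun p => x + (c₀ * ((inner ℝ v₀ (p - x) : ℝ))⁻¹) • (p - x) with hπdef
  have hπd : ∀ p : EuclideanSpace ℝ (Fin d), (inner ℝ v₀ (p - x) : ℝ) ≠ 0 →
      ∃ Dp : EuclideanSpace ℝ (Fin d) →L[ℝ] EuclideanSpace ℝ (Fin d),
        HasFDerivAt πf Dp p ∧ Dp (p - x) = 0 := by
    intro p hn
    have hsub : HasFDerivAt (fun q : EuclideanSpace ℝ (Fin d) => q - x)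
        (ContinuousLinearMap.id ℝ (EuclideanSpace ℝ (Fin d))) p :=
      (hasFDerivAt_id p).sub_const x
    have hℓ : HasFDerivAt (fun q : EuclideanSpace ℝ (Fin d) => (inner ℝ v₀ (q - x) : ℝ))
        (innerSL ℝ v₀) p := by
      have h2 := ((innerSL ℝ v₀).hasFDerivAt (x := p - x)).comp p hsub
      exact h2
    have hinv : HasFDerivAt (fun q : EuclideanSpace ℝ (Fin d) => ((inner ℝ v₀ (q - x) : ℝ))⁻¹)
        ((-(((inner ℝ v₀ (p - x) : ℝ)) ^ 2)⁻¹) • (innerSL ℝ v₀)) p := by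
      have := (hasDerivAt_inv hn).comp_hasFDerivAt p hℓ
      exact this
    have hmul := hinv.const_mul c₀
    have hsmul := hmul.smul hsub
    have hπ := hsmul.const_add x
    refine ⟨_, hπ, ?_⟩
    have hip : (inner ℝ v₀ (p - x) : ℝ) ≠ 0 := hn
    simp only [ContinuousLinearMap.add_apply, ContinuousLinearMap.smul_apply,
      ContinuousLinearMap.coe_id', id_eq, ContinuousLinearMap.smulRight_apply,
      innerSL_apply_apply, smul_eq_mul]
    rw [← add_smul]
    have hgen : ∀ n : ℝ, n ≠ 0 → c₀ * n⁻¹ + c₀ * (-(n ^ 2)⁻¹ * n) = 0 := by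
      intro n hn0; field_simp; ring
    rw [hgen _ hip, zero_smul]
  set G : Θ → EuclideanSpace ℝ (Fin (d-1)) → EuclideanSpace ℝ (Fin (d-1)) :=
    fun θ u => M (πf (φ θ u) - y) with hGdef
  set crit : Θ → Set (EuclideanSpace ℝ (Fin (d-1))) :=
    fun θ => {u | 0 < (inner ℝ v₀ (φ θ u - x) : ℝ) ∧
      fderiv ℝ (bb θ) u
          ((WithLp.equiv 2 (EuclideanSpace ℝ (Fin (d-1)) × ℝ)) ((T θ).symm (φ θ u - x))).1
        = ((WithLp.equiv 2 (EuclideanSpace ℝ (Fin (d-1)) × ℝ)) ((T θ).symm (φ θ u - x))).2}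
    with hcritdef
  have hGd : ∀ (θ : Θ) (u : EuclideanSpace ℝ (Fin (d-1))),
      0 < (inner ℝ v₀ (φ θ u - x) : ℝ) →
      ∃ D : EuclideanSpace ℝ (Fin (d-1)) →L[ℝ] EuclideanSpace ℝ (Fin (d-1)),
        HasFDerivAt (G θ) D u ∧
        (∀ cv, T θ ((WithLp.equiv 2 (EuclideanSpace ℝ (Fin (d-1)) × ℝ)).symm
            (cv, fderiv ℝ (bb θ) u cv)) = φ θ u - x → D cv = 0) := by
    intro θ u hpos
    obtain ⟨Dφ, hDφ, hDφapp⟩ := hφd θ u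
    obtain ⟨Dp, hDp, hDp0⟩ := hπd (φ θ u) (ne_of_gt hpos)
    have hMd : HasFDerivAt (fun q : EuclideanSpace ℝ (Fin d) => M (q - y)) M (πf (φ θ u)) := by
      have h1 : (fun q : EuclideanSpace ℝ (Fin d) => M (q - y)) = fun q => M q - M y := by
        funext q; rw [map_sub]
      rw [h1]
      exact M.hasFDerivAt.sub_const (M y)
    have h2 := hDp.comp u hDφ
    have h3 := hMd.comp u h2
    refine ⟨M.comp (Dp.comp Dφ), ?_, ?_⟩
    · simpa [hGdef, Function.comp_def] using h3
    · intro cv hcv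
      have hDφc : Dφ cv = φ θ u - x := by rw [hDφapp]; exact hcv
      simp [ContinuousLinearMap.comp_apply, hDφc, hDp0]
  have hdet : ∀ (θ : Θ), ∀ u ∈ crit θ, (fderiv ℝ (G θ) u).det = 0 := by
    intro θ u hu
    obtain ⟨hpos, htan⟩ := hu
    obtain ⟨D, hD, hD0⟩ := hGd θ u hpos
    set pr := (WithLp.equiv 2 (EuclideanSpace ℝ (Fin (d-1)) × ℝ)) ((T θ).symm (φ θ u - x))
      with hprdef
    have hradial : T θ ((WithLp.equiv 2 (EuclideanSpace ℝ (Fin (d-1)) × ℝ)).symm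
        (pr.1, fderiv ℝ (bb θ) u pr.1)) = φ θ u - x := by
      rw [htan, Prod.mk.eta, hprdef, Equiv.symm_apply_apply,
        LinearIsometryEquiv.apply_symm_apply]
    have hc0 : pr.1 ≠ 0 := by
      intro h0
      have h2 : pr.2 = 0 := by rw [← htan, h0, map_zero]
      have hpr0 : pr = 0 := Prod.ext h0 h2
      have hφx : φ θ u - x = 0 := by
        have := congrArg (fun q => T θ ((WithLp.equiv 2
          (EuclideanSpace ℝ (Fin (d-1)) × ℝ)).symm q)) hpr0
        simpa [hprdef] using this
      rw [hφx, inner_zero_right] at hpos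
      exact lt_irrefl 0 hpos
    have hker : D pr.1 = 0 := hD0 pr.1 hradial
    rw [hD.fderiv]
    have htfae := LinearMap.hasEigenvalue_zero_tfae
      (D.toLinearMap : Module.End ℝ (EuclideanSpace ℝ (Fin (d-1))))
    have hiff := htfae.out 3 5
    exact hiff.mpr ⟨pr.1, hc0, hker⟩
  have hmeasz : ∀ θ : Θ, MeasureTheory.volume (G θ '' crit θ) = 0 := by
    intro θ
    apply MeasureTheory.addHaar_image_eq_zero_of_det_fderivWithin_eq_zero MeasureTheory.volume
      (f' := fun u => fderiv ℝ (G θ) u) ?_ (fun u hu => hdet θ u hu)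
    intro u hu
    obtain ⟨D, hD, _⟩ := hGd θ u hu.1
    show HasFDerivWithinAt (G θ) (fderiv ℝ (G θ) u) (crit θ) u
    rw [hD.fderiv]
    exact hD.hasFDerivWithinAt
  -- pick a good point p
  have hNnull : MeasureTheory.volume (⋃ i ∈ (t : Set Θ), G i '' crit i) = 0 := by
    rw [MeasureTheory.measure_biUnion_null_iff t.countable_toSet]
    intro i _
    exact hmeasz i
  obtain ⟨p, hpball, hpN⟩ : ∃ p, p ∈ ball (0 : EuclideanSpace ℝ (Fin (d-1))) r ∧
      p ∉ ⋃ i ∈ (t : Set Θ), G i '' crit i := by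
    by_contra h
    push_neg at h
    have hsub : ball (0 : EuclideanSpace ℝ (Fin (d-1))) r ⊆ ⋃ i ∈ (t : Set Θ), G i '' crit i := h
    have hle := MeasureTheory.measure_mono (μ := MeasureTheory.volume) hsub
    rw [hNnull] at hle
    exact (measure_ball_pos MeasureTheory.volume (0 : EuclideanSpace ℝ (Fin (d-1))) hr).ne'
      (le_antisymm hle zero_le)
  set w : K := ψ.symm p with hwdef
  have hwnorm : ‖(w : EuclideanSpace ℝ (Fin d))‖ < r := by
    have h1 : ‖(w : EuclideanSpace ℝ (Fin d))‖ = ‖p‖ := by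
      rw [hwdef]
      rw [show ‖((ψ.symm p : K) : EuclideanSpace ℝ (Fin d))‖ = ‖(ψ.symm p : K)‖ from rfl]
      exact ψ.symm.norm_map p
    rw [h1]
    simpa [dist_zero_right] using hpball
  have hwK : (inner ℝ v₀ ((w : EuclideanSpace ℝ (Fin d))) : ℝ) = 0 := by
    have hmem : (w : EuclideanSpace ℝ (Fin d)) ∈ (Submodule.span ℝ {v₀})ᗮ := w.2
    exact (Submodule.mem_orthogonal _ _).mp hmem v₀ (Submodule.mem_span_singleton_self v₀)
  have hMw : M (w : EuclideanSpace ℝ (Fin d)) = p := by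
    rw [hMdef]
    simp only [ContinuousLinearMap.comp_apply]
    rw [show K.orthogonalProjectionOnto (w : EuclideanSpace ℝ (Fin d)) = w from
      Submodule.orthogonalProjectionOnto_mem_subspace_eq_self w]
    rw [show ψ.toLinearIsometry.toContinuousLinearMap w = ψ w from rfl]
    rw [hwdef]
    exact ψ.apply_symm_apply p
  refine ⟨(w : EuclideanSpace ℝ (Fin d)), hwnorm, ?_, ?_⟩
  · have hyx : y - x = c₀ • v₀ := by
      rw [hv₀def, smul_smul]
      rw [show c₀ * c₀⁻¹ = 1 by field_simp, one_smul]
    rw [hyx, real_inner_smul_left, hwK, mul_zero]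
  rw [← Set.not_infinite]
  intro hinf
  -- coverage argument
  set z : EuclideanSpace ℝ (Fin d) := y + (w : EuclideanSpace ℝ (Fin d)) with hzdef
  have hzx : (inner ℝ v₀ (z - x) : ℝ) = c₀ := by
    rw [hzdef, show y + (w : EuclideanSpace ℝ (Fin d)) - x
      = (y - x) + (w : EuclideanSpace ℝ (Fin d)) by abel, inner_add_right, hv₀x, hwK, add_zero]
  set S := segment ℝ x z ∩ Θ with hSdef
  have hSinf : S.Infinite := hinf
  obtain ⟨θa, hθaΘ, hacc⟩ := hSinf.exists_accPt_of_subset_isCompact hcomp inter_subset_right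
  have hsegcl : IsClosed (segment ℝ x z) := by
    rw [segment_eq_image']
    exact (isCompact_Icc.image (continuous_const.add (continuous_id.smul continuous_const))).isClosed
  have hScl : IsClosed S := hsegcl.inter hcomp.isClosed
  have h1 : θa ∈ closure (S \ {θa}) := by
    rw [accPt_principal_iff_clusterPt] at hacc
    exact mem_closure_iff_clusterPt.mpr hacc
  have hθaS : θa ∈ S := by
    have h2 : θa ∈ closure S := closure_mono diff_subset h1
    rwa [hScl.closure_eq] at h2
  obtain ⟨i, hit, hθball⟩ : ∃ i ∈ t, θa ∈ ball (i : EuclideanSpace ℝ (Fin d)) (ε i) := by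
    have h2 := ht hθaΘ
    simpa using h2
  obtain ⟨u₀, hu₀⟩ : ∃ u₀, θa = φ i u₀ := by
    have h2 : θa ∈ {q : EuclideanSpace ℝ (Fin d) | ∃ u : EuclideanSpace ℝ (Fin (d-1)),
        q = T i ((WithLp.equiv 2 (EuclideanSpace ℝ (Fin (d-1)) × ℝ)).symm (u, bb i u))} ∩
        ball (i : EuclideanSpace ℝ (Fin d)) (ε i) := by
      rw [← heq i]
      exact ⟨hθaΘ, hθball⟩
    obtain ⟨u₀, hu₀⟩ := h2.1
    exact ⟨u₀, hu₀⟩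
  obtain ⟨t₀, ht₀, hθaeq⟩ : ∃ t₀ ∈ Icc (0:ℝ) 1, x + t₀ • (z - x) = θa := by
    have h2 := hθaS.1
    rw [segment_eq_image'] at h2
    obtain ⟨τ, hτ, hh⟩ := h2
    exact ⟨τ, hτ, hh⟩
  have ht₀0 : t₀ ≠ 0 := by
    intro h
    rw [h, zero_smul, add_zero] at hθaeq
    exact hx (hθaeq ▸ hθaΘ)
  have ht₀pos : 0 < t₀ := lt_of_le_of_ne ht₀.1 (Ne.symm ht₀0)
  -- a sequence approaching θa
  obtain ⟨g, hgmem, hglim⟩ := mem_closure_iff_seq_limit.mp h1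
  have hgseg : ∀ n, ∃ τ ∈ Icc (0:ℝ) 1, x + τ • (z - x) = g n := by
    intro n
    have h2 := (hgmem n).1.1
    rw [segment_eq_image'] at h2
    obtain ⟨τ, hτ, hh⟩ := h2
    exact ⟨τ, hτ, hh⟩
  choose tn htn hgn using hgseg
  have hsn : ∀ n, (tn n - t₀) • (z - x) = g n - θa := by
    intro n
    rw [← hgn n, ← hθaeq, sub_smul]
    abel
  have hsnne : ∀ n, tn n - t₀ ≠ 0 := by
    intro n h
    have h2 := hsn n
    rw [h, zero_smul] at h2
    have h3 : g n = θa := by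
      have := sub_eq_zero.mp h2.symm
      exact this
    exact (hgmem n).2 h3
  have hsnlim : Filter.Tendsto (fun n => tn n - t₀) Filter.atTop (𝓝 0) := by
    have hgd : Filter.Tendsto (fun n => g n - θa) Filter.atTop (𝓝 0) := by
      have := hglim.sub_const θa
      simpa using this
    have hic : Continuous fun q : EuclideanSpace ℝ (Fin d) => (inner ℝ v₀ q : ℝ) :=
      continuous_const.inner continuous_id
    have hcont : Filter.Tendsto (fun n => (inner ℝ v₀ (g n - θa) : ℝ)) Filter.atTop (𝓝 0) := by
      have h2 := (hic.tendsto 0).comp hgd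
      simpa using (show Filter.Tendsto (fun n => (inner ℝ v₀ (g n - θa) : ℝ)) Filter.atTop (𝓝 (inner ℝ v₀ 0)) from h2)
    have heqq : ∀ n, tn n - t₀ = (inner ℝ v₀ (g n - θa) : ℝ) / c₀ := by
      intro n
      rw [← hsn n, real_inner_smul_right, hzx]
      field_simp
    rw [funext heqq]
    simpa using hcont.div_const c₀
  -- chart coordinates of z - x
  set przx := (WithLp.equiv 2 (EuclideanSpace ℝ (Fin (d-1)) × ℝ)) ((T i).symm (z - x))
    with hprzx
  set cz := przx.1 with hcz
  set qz := przx.2 with hqz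
  have hpairdiff : ∀ u u' : EuclideanSpace ℝ (Fin (d-1)),
      (WithLp.equiv 2 (EuclideanSpace ℝ (Fin (d-1)) × ℝ)) ((T i).symm (φ i u - φ i u'))
        = (u - u', bb i u - bb i u') := by
    intro u u'
    rw [hφdef]
    simp only [map_sub, LinearIsometryEquiv.symm_apply_apply, WithLp.equiv_apply, WithLp.equiv_symm_apply,
      WithLp.ofLp_sub, WithLp.ofLp_toLp]
    rfl
  have hev : ∀ᶠ n in Filter.atTop, ∃ u, g n = φ i u := by
    have hball' : ∀ᶠ n in Filter.atTop, g n ∈ ball (i : EuclideanSpace ℝ (Fin d)) (ε i) :=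
      hglim.eventually (isOpen_ball.mem_nhds hθball)
    filter_upwards [hball'] with n hn
    have h2 : g n ∈ {q : EuclideanSpace ℝ (Fin d) | ∃ u : EuclideanSpace ℝ (Fin (d-1)),
        q = T i ((WithLp.equiv 2 (EuclideanSpace ℝ (Fin (d-1)) × ℝ)).symm (u, bb i u))} ∩
        ball (i : EuclideanSpace ℝ (Fin d)) (ε i) := by
      rw [← heq i]
      exact ⟨(hgmem n).1.2, hn⟩
    obtain ⟨u, hu⟩ := h2.1
    exact ⟨u, hu⟩
  have hcomps : ∀ᶠ n in Filter.atTop, ∃ u, g n = φ i u ∧ u - u₀ = (tn n - t₀) • cz ∧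
      bb i u - bb i u₀ = (tn n - t₀) * qz := by
    filter_upwards [hev] with n hn
    obtain ⟨u, hu⟩ := hn
    have hdiff : φ i u - φ i u₀ = (tn n - t₀) • (z - x) := by
      rw [← hu, ← hu₀, hsn n]
    have h2 := congrArg
      (fun q => (WithLp.equiv 2 (EuclideanSpace ℝ (Fin (d-1)) × ℝ)) ((T i).symm q)) hdiff
    rw [hpairdiff u u₀] at h2
    have hrhs : (WithLp.equiv 2 (EuclideanSpace ℝ (Fin (d-1)) × ℝ))
        ((T i).symm ((tn n - t₀) • (z - x))) = (tn n - t₀) • przx := by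
      rw [map_smul]; rfl
    rw [hrhs] at h2
    refine ⟨u, hu, ?_, ?_⟩
    · have := congrArg Prod.fst h2
      simpa [hcz] using this
    · have := congrArg Prod.snd h2
      simpa [hqz, smul_eq_mul] using this
  -- tangency via slope
  have hline : HasDerivAt (fun s : ℝ => u₀ + s • cz) cz 0 := by
    simpa using ((hasDerivAt_id (0:ℝ)).smul_const cz).const_add u₀
  have hDb : HasDerivAt (fun s : ℝ => bb i (u₀ + s • cz)) (fderiv ℝ (bb i) u₀ cz) 0 := by
    have hpt : u₀ + (0:ℝ) • cz = u₀ := by simp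
    have hl : HasFDerivAt (bb i) (fderiv ℝ (bb i) u₀) (u₀ + (0:ℝ) • cz) := by
      rw [hpt]
      exact (hbdiff i u₀).hasFDerivAt
    exact hl.comp_hasDerivAt 0 hline
  rw [hasDerivAt_iff_tendsto_slope] at hDb
  have hsnlim' : Filter.Tendsto (fun n => tn n - t₀) Filter.atTop (𝓝[≠] (0:ℝ)) := by
    apply tendsto_nhdsWithin_of_tendsto_nhds_of_eventually_within _ hsnlim
    exact Filter.Eventually.of_forall (fun n => hsnne n)
  have hslope := hDb.comp hsnlim'
  have hslope_eq : ∀ᶠ n in Filter.atTop,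
      (slope (fun s : ℝ => bb i (u₀ + s • cz)) 0 ∘ fun n => tn n - t₀) n = qz := by
    filter_upwards [hcomps] with n hn
    obtain ⟨u, hu, hu1, hu2⟩ := hn
    have huu : u₀ + (tn n - t₀) • cz = u := by rw [← hu1]; abel
    simp only [Function.comp_apply, slope_def_field]
    rw [huu]
    simp only [zero_smul, add_zero, sub_zero]
    rw [hu2]
    exact mul_div_cancel_left₀ qz (hsnne n)
  have hqz_eq : fderiv ℝ (bb i) u₀ cz = qz :=
    tendsto_nhds_unique (hslope.congr' hslope_eq) tendsto_const_nhds
  -- u₀ is a critical point and G i u₀ = p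
  have hφu₀x : φ i u₀ - x = t₀ • (z - x) := by
    rw [← hu₀, ← hθaeq]
    abel
  have hpr₀ : (WithLp.equiv 2 (EuclideanSpace ℝ (Fin (d-1)) × ℝ)) ((T i).symm (φ i u₀ - x))
      = t₀ • przx := by
    rw [hφu₀x, map_smul]; rfl
  have hipos : 0 < (inner ℝ v₀ (φ i u₀ - x) : ℝ) := by
    rw [hφu₀x, real_inner_smul_right, hzx]
    exact mul_pos ht₀pos hc₀
  have hu₀crit : u₀ ∈ crit i := by
    rw [hcritdef]
    refine ⟨hipos, ?_⟩
    rw [hpr₀]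
    have h1 : (t₀ • przx).1 = t₀ • cz := by rw [hcz]; rfl
    have h2 : (t₀ • przx).2 = t₀ * qz := by rw [hqz]; rfl
    rw [h1, h2, map_smul, hqz_eq, smul_eq_mul]
  have hπθa : πf (φ i u₀) = z := by
    show x + (c₀ * ((inner ℝ v₀ (φ i u₀ - x) : ℝ))⁻¹) • (φ i u₀ - x) = z
    rw [hφu₀x, real_inner_smul_right, hzx, smul_smul]
    rw [show c₀ * (t₀ * c₀)⁻¹ * t₀ = 1 by field_simp, one_smul]
    abel
  have hGp : G i u₀ = p := by
    show M (πf (φ i u₀) - y) = p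
    rw [hπθa]
    rw [show z - y = (w : EuclideanSpace ℝ (Fin d)) by rw [hzdef]; abel]
    exact hMw
  exact hpN (mem_iUnion₂.mpr ⟨i, hit, ⟨u₀, hu₀crit, hGp⟩⟩)

/-- if `d ≥ 2` and `Θ ⊆ ℝ^d` is a nonempty compact `C³`-hypersurface of
positive reach, then any two points of `ℝ^d \ Θ` can be joined by a curve of length
arbitrarily close to their Euclidean distance which meets `Θ` only in finitely many
points. -/
theorem exists_short_curve_finitely_meeting_hypersurface
    (d : ℕ) (hd : 2 ≤ d) (Θ : Set (EuclideanSpace ℝ (Fin d)))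
    (hne : Θ.Nonempty) (hcomp : IsCompact Θ)
    (hreach : HasPositiveReach Θ) (hsurf : IsC3Hypersurface Θ) :
    ∀ x ∈ Θᶜ, ∀ y ∈ Θᶜ, ∀ η > (0 : ℝ),
      ∃ γ : ℝ → EuclideanSpace ℝ (Fin d),
        ContinuousOn γ (Set.Icc 0 1) ∧ γ 0 = x ∧ γ 1 = y ∧
        curveLength γ < ENNReal.ofReal (‖y - x‖ + η) ∧
        (γ '' Set.Icc 0 1 ∩ Θ).Finite := by
  intro x hx y hy η hη
  rw [mem_compl_iff] at hx hy
  by_cases hxy : x = y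
  · refine ⟨fun _ => x, continuousOn_const, rfl, hxy, ?_, ?_⟩
    · have h0 : curveLength (fun _ : ℝ => x) = 0 := by
        apply eVariationOn.constant_on
        intro q hq q' hq'
        obtain ⟨_, _, rfl⟩ := hq
        obtain ⟨_, _, rfl⟩ := hq'
        rfl
      rw [h0]
      exact ENNReal.ofReal_pos.mpr (add_pos_of_nonneg_of_pos (norm_nonneg _) hη)
    · apply Set.Finite.subset (finite_singleton x)
      rintro q ⟨⟨_, _, rfl⟩, _⟩
      exact mem_singleton _
  · -- main case
    have hdpos : 0 < Metric.infDist y Θ := by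
      rw [← IsClosed.notMem_iff_infDist_pos hcomp.isClosed hne]
      exact hy
    set r := min (η/4) (Metric.infDist y Θ) with hrdef
    have hrpos : 0 < r := lt_min (by linarith) hdpos
    obtain ⟨w, hwr, hwperp, hwfin⟩ := exists_good_w d hd Θ hcomp hsurf x y hx hxy r hrpos
    set z := y + w with hzdef
    -- the second segment misses Θ
    have hzy : segment ℝ z y ∩ Θ = ∅ := by
      rw [eq_empty_iff_forall_notMem]
      rintro q ⟨hq1, hq2⟩
      rw [segment_symm, segment_eq_image'] at hq1
      obtain ⟨τ, hτ, rfl⟩ := hq1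
      have hzyw : z - y = w := by rw [hzdef]; abel
      have hdist : dist y (y + τ • (z - y)) < Metric.infDist y Θ := by
        rw [dist_eq_norm, hzyw]
        have h1 : ‖y - (y + τ • w)‖ = τ * ‖w‖ := by
          rw [show y - (y + τ • w) = -(τ • w) by abel, norm_neg, norm_smul,
            Real.norm_eq_abs, abs_of_nonneg hτ.1]
        rw [h1]
        have h2 : τ * ‖w‖ ≤ ‖w‖ := by
          nlinarith [norm_nonneg w, hτ.1, hτ.2]
        calc τ * ‖w‖ ≤ ‖w‖ := h2
          _ < r := hwr
          _ ≤ Metric.infDist y Θ := min_le_right _ _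
      exact absurd (Metric.infDist_le_dist_of_mem hq2) (not_le.mpr hdist)
    set γ : ℝ → EuclideanSpace ℝ (Fin d) := fun s =>
      x + (min (2*s) 1) • (z - x) + (max (2*s - 1) 0) • (y - z) with hγdef
    have hγc : Continuous γ := by
      apply Continuous.add
      · exact continuous_const.add
          (((continuous_const.mul continuous_id).min continuous_const).smul continuous_const)
      · exact ((((continuous_const.mul continuous_id).sub continuous_const).max
          continuous_const).smul continuous_const)
    have hγ0 : γ 0 = x := by
      rw [hγdef]
      norm_num
    have hγ1 : γ 1 = y := by
      rw [hγdef]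
      norm_num
    -- length estimate
    have heq1 : EqOn γ (fun s : ℝ => x + s • ((2:ℝ) • (z - x))) (Icc 0 (1/2)) := by
      intro s hs
      rw [hγdef]
      simp only []
      rw [min_eq_left (by linarith [hs.2]), max_eq_right (by linarith [hs.2]), zero_smul,
        add_zero, smul_smul, mul_comm]
    have heq2 : EqOn γ (fun s : ℝ => (z - (y - z)) + s • ((2:ℝ) • (y - z))) (Icc (1/2) 1) := by
      intro s hs
      rw [hγdef]
      simp only []
      rw [min_eq_right (by linarith [hs.1]), max_eq_left (by linarith [hs.1]), one_smul,
        smul_smul]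
      rw [show (s * 2 : ℝ) = (2*s - 1) + 1 by ring, add_smul, one_smul]
      abel
    have hsplit : eVariationOn γ (Icc 0 1)
        = eVariationOn γ (Icc 0 (1/2)) + eVariationOn γ (Icc (1/2) 1) := by
      have h := eVariationOn.Icc_add_Icc γ (s := (univ : Set ℝ)) (a := 0) (b := 1/2) (c := 1)
        (by norm_num) (by norm_num) (mem_univ _)
      simpa using h.symm
    have hb1 : eVariationOn γ (Icc 0 (1/2)) ≤ ENNReal.ofReal ‖z - x‖ := by
      rw [eVariationOn.eq_of_eqOn heq1]
      have := evar_affine_le x ((2:ℝ) • (z - x)) (c := 0) (e := 1/2) (by norm_num)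
      convert this using 2
      rw [norm_smul, Real.norm_ofNat]
      ring
    have hb2 : eVariationOn γ (Icc (1/2) 1) ≤ ENNReal.ofReal ‖y - z‖ := by
      rw [eVariationOn.eq_of_eqOn heq2]
      have := evar_affine_le (z - (y - z)) ((2:ℝ) • (y - z)) (c := 1/2) (e := 1) (by norm_num)
      convert this using 2
      rw [norm_smul, Real.norm_ofNat]
      ring
    have hlen : curveLength γ < ENNReal.ofReal (‖y - x‖ + η) := by
      have hzx : ‖z - x‖ ≤ ‖y - x‖ + ‖w‖ := by
        rw [hzdef, show y + w - x = (y - x) + w by abel]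
        exact norm_add_le _ _
      have hyz : ‖y - z‖ = ‖w‖ := by
        rw [hzdef, show y - (y + w) = -w by abel, norm_neg]
      have hr4 : r ≤ η/4 := min_le_left _ _
      have hsum : ‖z - x‖ + ‖y - z‖ < ‖y - x‖ + η := by
        rw [hyz]
        linarith [hwr]
      calc curveLength γ = eVariationOn γ (Icc 0 1) := rfl
        _ = eVariationOn γ (Icc 0 (1/2)) + eVariationOn γ (Icc (1/2) 1) := hsplit
        _ ≤ ENNReal.ofReal ‖z - x‖ + ENNReal.ofReal ‖y - z‖ := by
            exact add_le_add hb1 hb2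
        _ = ENNReal.ofReal (‖z - x‖ + ‖y - z‖) := by
            rw [← ENNReal.ofReal_add (norm_nonneg _) (norm_nonneg _)]
        _ < ENNReal.ofReal (‖y - x‖ + η) := by
            rw [ENNReal.ofReal_lt_ofReal_iff (by positivity)]
            exact hsum
    -- image and finiteness
    have himg : γ '' Icc 0 1 ⊆ segment ℝ x z ∪ segment ℝ z y := by
      rintro q ⟨s, hs, rfl⟩
      rcases le_or_gt s (1/2) with hle | hgt
      · left
        rw [segment_eq_image']
        refine ⟨2*s, ⟨by linarith [hs.1], by linarith⟩, ?_⟩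
        rw [hγdef]
        simp only []
        rw [min_eq_left (by linarith), max_eq_right (by linarith), zero_smul, add_zero]
      · right
        rw [segment_eq_image']
        refine ⟨2*s - 1, ⟨by linarith, by linarith [hs.2]⟩, ?_⟩
        rw [hγdef]
        simp only []
        rw [min_eq_right (by linarith), max_eq_left (by linarith), one_smul]
        abel
    have hfin : (γ '' Icc 0 1 ∩ Θ).Finite := by
      apply Set.Finite.subset (Set.Finite.union hwfin (hzy ▸ finite_empty))
      rintro q ⟨hq1, hq2⟩
      rcases himg hq1 with h | h
      · exact Or.inl ⟨h, hq2⟩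
      · exact Or.inr ⟨h, hq2⟩
    exact ⟨γ, hγc.continuousOn, hγ0, hγ1, hlen, hfin⟩
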